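/- Let T be a tree and D a set of guards. If t_T(D) = t < +∞, then (T, D) has an arena X with ctd(X) ≤ t. -/

import Mathlib

/-- Attacker wins within `t` turns in the mobile domination game. -/
def AttackerWinsIn {V : Type*} [DecidableEq V] (G : SimpleGraph V) :
    ℕ → Finset V → Prop
  | 0, _ => False
  | (t + 1), D => ∃ v, v ∉ D ∧
      ∀ u ∈ D, G.Adj u v → AttackerWinsIn G t (insert v (D.erase u))

/-- `t_G(D)`, the minimum number of turns in which Attacker can force a win;
`⊤` iff `D` is an eternal dominating set. -/
noncomputable def gameValue {V : Type*} [DecidableEq V] (G : SimpleGraph V)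
    (D : Finset V) : ℕ∞ :=
  sInf {n : ℕ∞ | ∃ t : ℕ, n = (t : ℕ∞) ∧ AttackerWinsIn G t D}

/-- `TreedepthLE G k` : there is a rooted forest of height at most `k` (encoded by
assigning to each vertex its root-to-vertex path, ancestor‑descendant = prefix) in
which the endpoints of every edge of `G` are in ancestor-descendant relation. -/
def TreedepthLE {W : Type*} (G : SimpleGraph W) (k : ℕ) : Prop :=
  ∃ ι : W → List ℕ, Function.Injective ι ∧
    (∀ v, 1 ≤ (ι v).length ∧ (ι v).length ≤ k) ∧
    (∀ u v, G.Adj u v → ((ι u <+: ι v) ∨ (ι v <+: ι u)))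

/-- The treedepth of a graph: the minimum height of such a rooted forest. -/
noncomputable def treedepth {W : Type*} (G : SimpleGraph W) : ℕ :=
  sInf {k | TreedepthLE G k}

/-- `X` is an arena of `(T, D)` : a subtree (nonempty connected induced subgraph)
of `T` such that (1) `X ∩ D` and `X \ D` are independent; (2) every guarded vertex
of `X` has degree exactly 2 in `X`; (3) no unguarded vertex of `X` has a guarded
neighbor outside `X`. -/
def IsArena {V : Type*} [DecidableEq V] (T : SimpleGraph V) [DecidableRel T.Adj]
    (D X : Finset V) : Prop :=
  (T.induce (X : Set V)).Connected ∧
  (∀ u ∈ X, ∀ v ∈ X, u ∈ D → v ∈ D → ¬ T.Adj u v) ∧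
  (∀ u ∈ X, ∀ v ∈ X, u ∉ D → v ∉ D → ¬ T.Adj u v) ∧
  (∀ u ∈ X, u ∈ D → (X.filter fun w => T.Adj u w).card = 2) ∧
  (∀ v ∈ X, v ∉ D → ∀ u, T.Adj v u → u ∈ D → u ∈ X)

/-- The contracted tree of an arena `X` : on the unguarded vertices of `X`, each
guarded vertex of `X` is replaced by an edge between its two neighbors in `X`. -/
def contractedTree {V : Type*} [DecidableEq V] (T : SimpleGraph V)
    (D X : Finset V) : SimpleGraph {v // v ∈ X \ D} :=
  SimpleGraph.fromRel fun a b =>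
    T.Adj a.1 b.1 ∨ ∃ g ∈ X ∩ D, T.Adj a.1 g ∧ T.Adj g b.1

/-- The contracted treedepth of an arena. -/
noncomputable def ctd {V : Type*} [DecidableEq V] (T : SimpleGraph V)
    (D X : Finset V) : ℕ :=
  treedepth (contractedTree T D X)


open SimpleGraph

set_option linter.unusedSectionVars false

section Aux
variable {V : Type*} [Fintype V] [DecidableEq V] (T : SimpleGraph V) [DecidableRel T.Adj]

/-- Reachability by a walk whose support stays in `A`. -/
def ReachIn (A : Finset V) (x y : V) : Prop :=
  ∃ p : T.Walk x y, ∀ z ∈ p.support, z ∈ A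

variable {T}

lemma ReachIn.mem_left {A : Finset V} {x y : V} (h : ReachIn T A x y) : x ∈ A := by
  obtain ⟨p, hp⟩ := h; exact hp x p.start_mem_support

lemma ReachIn.mem_right {A : Finset V} {x y : V} (h : ReachIn T A x y) : y ∈ A := by
  obtain ⟨p, hp⟩ := h; exact hp y p.end_mem_support

lemma ReachIn.refl {A : Finset V} {x : V} (hx : x ∈ A) : ReachIn T A x x :=
  ⟨Walk.nil, by simp [hx]⟩

lemma ReachIn.symm {A : Finset V} {x y : V} (h : ReachIn T A x y) : ReachIn T A y x := by
  obtain ⟨p, hp⟩ := h; exact ⟨p.reverse, by simpa using hp⟩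

lemma ReachIn.trans {A : Finset V} {x y z : V} (h : ReachIn T A x y)
    (h' : ReachIn T A y z) : ReachIn T A x z := by
  obtain ⟨p, hp⟩ := h; obtain ⟨q, hq⟩ := h'
  refine ⟨p.append q, fun w hw => ?_⟩
  rcases (Walk.mem_support_append_iff _ _).1 hw with h | h
  · exact hp w h
  · exact hq w h

lemma reachIn_single {A : Finset V} {y z : V} (hyz : T.Adj y z) (hy : y ∈ A) (hz : z ∈ A) :
    ReachIn T A y z := by
  refine ⟨Walk.cons hyz Walk.nil, fun w hw => ?_⟩
  simp only [Walk.support_cons, Walk.support_nil, List.mem_cons, List.not_mem_nil,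
    or_false] at hw
  rcases hw with rfl | rfl <;> assumption

lemma ReachIn.adj {A : Finset V} {x y z : V} (h : ReachIn T A x y)
    (hyz : T.Adj y z) (hz : z ∈ A) : ReachIn T A x z :=
  h.trans (reachIn_single hyz h.mem_right hz)

lemma ReachIn.mono {A B : Finset V} (hAB : A ⊆ B) {x y : V} (h : ReachIn T A x y) :
    ReachIn T B x y := by
  obtain ⟨p, hp⟩ := h; exact ⟨p, fun z hz => hAB (hp z hz)⟩

lemma ReachIn.support_mem {A : Finset V} {x y : V} (h : ReachIn T A x y) :
    ∃ p : T.Walk x y, (∀ z ∈ p.support, z ∈ A) ∧ ∀ z ∈ p.support, ReachIn T A x z := by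
  obtain ⟨p, hp⟩ := h
  exact ⟨p, hp, fun z hz => ⟨p.takeUntil z hz, fun w hw => hp w (Walk.support_takeUntil_subset _ _ hw)⟩⟩

/-- From a walk in the induced graph to `ReachIn`. -/
lemma reachIn_of_induceWalk {A : Finset V} :
    ∀ {a b : (A : Set V)}, (T.induce (A : Set V)).Walk a b → ReachIn T A a.1 b.1 := by
  intro a b p
  induction p with
  | nil => exact ReachIn.refl (by exact_mod_cast Subtype.mem _)
  | @cons u v w h p ih =>
      exact ReachIn.trans
        (reachIn_single (by exact h) (by exact_mod_cast u.2) (by exact_mod_cast v.2)) ih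

lemma reachIn_of_connected {A : Finset V} (h : (T.induce (A : Set V)).Connected)
    {x y : V} (hx : x ∈ A) (hy : y ∈ A) : ReachIn T A x y := by
  obtain ⟨p⟩ := h.preconnected ⟨x, by exact_mod_cast hx⟩ ⟨y, by exact_mod_cast hy⟩
  exact reachIn_of_induceWalk p

lemma induceReachable_of_walk {A : Finset V} :
    ∀ {x y : V} (p : T.Walk x y) (hs : ∀ z ∈ p.support, z ∈ A)
      (hx : x ∈ (A : Set V)) (hy : y ∈ (A : Set V)),
      (T.induce (A : Set V)).Reachable ⟨x, hx⟩ ⟨y, hy⟩ := by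
  intro x y p
  induction p with
  | nil => intro _ _ _; rfl
  | @cons u v w h p ih =>
      intro hs hx hy
      have hv : ∀ z ∈ p.support, z ∈ A := fun z hz => hs z (by simp [hz])
      have hv' : v ∈ (A : Set V) := by exact_mod_cast hv v p.start_mem_support
      exact Reachable.trans ⟨Walk.cons (by exact h) Walk.nil⟩ (ih hv hv' hy)

lemma connected_of_reachIn {A : Finset V} (hne : A.Nonempty)
    (h : ∀ x ∈ A, ∀ y ∈ A, ReachIn T A x y) : (T.induce (A : Set V)).Connected := by
  have : Nonempty (A : Set V) := ⟨⟨hne.choose, by exact_mod_cast hne.choose_spec⟩⟩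
  refine ⟨fun a b => ?_⟩
  obtain ⟨p, hp⟩ := h a.1 (by exact_mod_cast a.2) b.1 (by exact_mod_cast b.2)
  have := induceReachable_of_walk (A := A) p hp (by exact_mod_cast a.2) (by exact_mod_cast b.2)
  convert this

/-- In a tree, two distinct neighbours of `u` cannot be joined by a walk avoiding `u`. -/
lemma tree_no_two (hT : T.IsTree) {u x y : V} (hx : T.Adj u x) (hy : T.Adj u y)
    (hxy : x ≠ y) (p : T.Walk x y) (hp : u ∉ p.support) : False := by
  have hq : u ∉ p.bypass.support := fun h => hp (Walk.support_bypass_subset _ h)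
  have h2 : (Walk.cons hx.symm (Walk.cons hy Walk.nil) : T.Walk x y).IsPath := by
    rw [Walk.isPath_def]
    simp [hx.ne', hy.ne, hxy]
  have := (isAcyclic_iff_path_unique.1 hT.2) ⟨p.bypass, p.bypass_isPath⟩ ⟨_, h2⟩
  apply hq
  rw [show p.bypass = (⟨p.bypass, p.bypass_isPath⟩ : T.Path x y).1 from rfl, this]
  simp

/-- Two distinct neighbours of `v` are not joined by a walk avoiding `v`. -/
lemma tree_sep {A : Finset V} (hT : T.IsTree) {v u u' : V} (h1 : T.Adj v u) (h2 : T.Adj v u')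
    (hne : u ≠ u') (hvA : v ∉ A) (h : ReachIn T A u u') : False := by
  obtain ⟨p, hp⟩ := h
  exact tree_no_two hT h1 h2 hne p (fun hv => hvA (hp v hv))

end Aux
section Main
variable {V : Type*} [Fintype V] [DecidableEq V] (T : SimpleGraph V) [DecidableRel T.Adj]

/-- The vertex set of a half-arena: `u` together with `H` and the guards touching `H`. -/
def hXset (D H : Finset V) (u : V) : Finset V :=
  insert u (H ∪ D.filter fun g => ∃ x ∈ H, T.Adj g x)

/-- Properties of a half-arena `H` hanging on the guard `u`, itself adjacent to `v`. -/
def HCprops (D : Finset V) (v u : V) (t : ℕ) (H : Finset V) (ι : V → List ℕ) : Prop :=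
  (∀ x ∈ H, x ∉ D) ∧
  (∀ x ∈ H, ∀ y ∈ H, ¬ T.Adj x y) ∧
  (∃ x₁, H.filter (fun w => T.Adj u w) = {x₁}) ∧
  (∀ g ∈ D, g ≠ u → (∃ x ∈ H, T.Adj g x) → (H.filter fun w => T.Adj g w).card = 2) ∧
  (∀ g ∈ D, (g = u ∨ ∃ x ∈ H, T.Adj g x) → ∀ g' ∈ D, (g' = u ∨ ∃ x ∈ H, T.Adj g' x) →
    ¬ T.Adj g g') ∧
  (∀ x ∈ hXset T D H u, ReachIn T (hXset T D H u) u x) ∧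
  (v ∉ hXset T D H u) ∧
  Set.InjOn ι ↑H ∧
  (∀ x ∈ H, 1 ≤ (ι x).length ∧ (ι x).length ≤ t) ∧
  (∀ x ∈ H, ∀ y ∈ H, x ≠ y →
    (T.Adj x y ∨ ∃ g ∈ D, g ≠ u ∧ T.Adj x g ∧ T.Adj g y) →
    ((ι x <+: ι y) ∨ (ι y <+: ι x)))

def HalfCore (D : Finset V) (v u : V) (t : ℕ) : Prop :=
  ∃ H ι, HCprops T D v u t H ι

/-- An explicit treedepth witness for the contracted tree of `X`. -/
def CoreWitness (D X : Finset V) (ι : V → List ℕ) (t : ℕ) : Prop :=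
  Set.InjOn ι ↑(X \ D) ∧
  (∀ x ∈ X \ D, 1 ≤ (ι x).length ∧ (ι x).length ≤ t) ∧
  (∀ x ∈ X \ D, ∀ y ∈ X \ D, x ≠ y →
    (T.Adj x y ∨ ∃ g ∈ X ∩ D, T.Adj x g ∧ T.Adj g y) →
    ((ι x <+: ι y) ∨ (ι y <+: ι x)))

variable {T}

lemma CoreWitness.mono {D X : Finset V} {ι : V → List ℕ} {t t' : ℕ} (h : CoreWitness T D X ι t)
    (htt : t ≤ t') : CoreWitness T D X ι t' := by
  obtain ⟨h1, h2, h3⟩ := h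
  exact ⟨h1, fun x hx => ⟨(h2 x hx).1, le_trans (h2 x hx).2 htt⟩, h3⟩

/-- Either the arena of the next position can be reused, or it yields a half-arena at `(v,u)`. -/
lemma extract (hT : T.IsTree) {D : Finset V} {v u : V} (hvD : v ∉ D) (huD : u ∈ D)
    (hadj : T.Adj u v) {X' : Finset V} {ι' : V → List ℕ} {t : ℕ}
    (hA : IsArena T (insert v (D.erase u)) X')
    (hW : CoreWitness T (insert v (D.erase u)) X' ι' t) :
    (∃ X ι, IsArena T D X ∧ CoreWitness T D X ι t) ∨ HalfCore T D v u t := by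
  classical
  obtain ⟨hconn', h2', h3', h4', h5'⟩ := hA
  obtain ⟨hinj', hlen', hpfx'⟩ := hW
  set Du := insert v (D.erase u) with hDu
  have hvu : v ≠ u := fun h => hvD (h ▸ huD)
  have hvDu : v ∈ Du := Finset.mem_insert_self v _
  have huDu : u ∉ Du := by
    simp [hDu, Finset.mem_insert, hvu.symm]
  have hmemDu : ∀ g, g ∈ D → g ≠ u → g ∈ Du := fun g hg hne =>
    Finset.mem_insert_of_mem (Finset.mem_erase.2 ⟨hne, hg⟩)
  have hDuD : ∀ g ∈ Du, g ≠ v → g ∈ D := by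
    intro g hg hne
    rcases Finset.mem_insert.1 hg with h | h
    · exact absurd h hne
    · exact (Finset.mem_erase.1 h).2
  have hDgv : ∀ g ∈ D, g ≠ v := fun g hg h => hvD (h ▸ hg)
  have reach' : ∀ x ∈ X', ∀ y ∈ X', ReachIn T X' x y :=
    fun x hx y hy => reachIn_of_connected hconn' hx hy
  by_cases hvX : v ∈ X'
  · -- v is used as a guard by X' : extract a component of X' - v, a global arena
    left
    obtain ⟨a, b, hab, hfab⟩ := Finset.card_eq_two.1 (h4' v hvX hvDu)
    have haX : a ∈ X' ∧ T.Adj v a := by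
      have : a ∈ X'.filter (fun w => T.Adj v w) := by rw [hfab]; simp
      exact ⟨(Finset.mem_filter.1 this).1, (Finset.mem_filter.1 this).2⟩
    have hbX : b ∈ X' ∧ T.Adj v b := by
      have : b ∈ X'.filter (fun w => T.Adj v w) := by rw [hfab]; simp
      exact ⟨(Finset.mem_filter.1 this).1, (Finset.mem_filter.1 this).2⟩
    have hnb : ∀ w ∈ X', T.Adj v w → w = a ∨ w = b := by
      intro w hw hvw
      have : w ∈ X'.filter (fun w => T.Adj v w) := Finset.mem_filter.2 ⟨hw, hvw⟩
      rw [hfab] at this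
      simpa using this
    have haDu : a ∉ Du := fun h => h2' v hvX a haX.1 hvDu h haX.2
    have hbDu : b ∉ Du := fun h => h2' v hvX b hbX.1 hvDu h hbX.2
    have hfirst : ∀ x ∈ X', x ≠ v →
        (ReachIn T (X'.erase v) a x ∨ ReachIn T (X'.erase v) b x) := by
      intro x hx hxv
      obtain ⟨p, hp⟩ := reach' v hvX x hx
      obtain ⟨q, hqsup, hqpath⟩ : ∃ q : T.Walk v x, (∀ z ∈ q.support, z ∈ X') ∧ q.IsPath :=
        ⟨p.bypass, fun z hz => hp z (SimpleGraph.Walk.support_bypass_subset p hz),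
          p.bypass_isPath⟩
      cases q with
      | nil => exact absurd rfl hxv.symm
      | @cons _ w _ hvw r =>
          have hwX : w ∈ X' := hqsup w (by simp)
          have hvr : v ∉ r.support := by
            have := hqpath.2
            simp only [SimpleGraph.Walk.support_cons, List.nodup_cons] at this
            exact this.1
          have hrr : ReachIn T (X'.erase v) w x := by
            refine ⟨r, fun z hz => Finset.mem_erase.2 ⟨?_, hqsup z (by simp [hz])⟩⟩
            rintro rfl
            exact hvr hz
          rcases hnb w hwX hvw with rfl | rfl
          · exact Or.inl hrr
          · exact Or.inr hrr
    -- the main construction for a chosen side c avoiding u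
    have main : ∀ c, c ∈ X' → c ∉ Du → T.Adj v c →
        u ∉ X'.filter (fun x => x ≠ v ∧ ReachIn T (X'.erase v) c x) →
        (∃ X ι, IsArena T D X ∧ CoreWitness T D X ι t) := by
      intro c hcX hcDu hvc hPu
      set P := X'.filter (fun x => x ≠ v ∧ ReachIn T (X'.erase v) c x) with hP
      have hPsub : P ⊆ X' := Finset.filter_subset _ _
      have hPmem : ∀ x, x ∈ P ↔ x ∈ X' ∧ x ≠ v ∧ ReachIn T (X'.erase v) c x := by
        intro x; simp [hP, Finset.mem_filter]
      have hPv : v ∉ P := fun h => ((hPmem v).1 h).2.1 rfl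
      have hcv : c ≠ v := fun h => hcDu (by rw [h]; exact hvDu)
      have hcP : c ∈ P := (hPmem c).2 ⟨hcX, hcv,
        ReachIn.refl (Finset.mem_erase.2 ⟨hcv, hcX⟩)⟩
      have hclose : ∀ x ∈ P, ∀ w, w ∈ X' → w ≠ v → T.Adj x w → w ∈ P := by
        intro x hx w hw hwv hxw
        obtain ⟨_, _, hr⟩ := (hPmem x).1 hx
        exact (hPmem w).2 ⟨hw, hwv, hr.adj hxw (Finset.mem_erase.2 ⟨hwv, hw⟩)⟩
      have hPD : ∀ w ∈ P, (w ∈ D ↔ w ∈ Du) := by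
        intro w hw
        have hwv : w ≠ v := ((hPmem w).1 hw).2.1
        have hwu : w ≠ u := fun h => hPu (h ▸ hw)
        exact ⟨fun h => hmemDu w h hwu, fun h => hDuD w h hwv⟩
      have hu_not_nbr : ∀ x ∈ P, x ∉ D → ¬ T.Adj u x := by
        intro x hx hxD hux
        have hxX : x ∈ X' := hPsub hx
        have hxv : x ≠ v := ((hPmem x).1 hx).2.1
        have hxDu : x ∉ Du := by
          intro h
          exact hxD (hDuD x h hxv)
        by_cases huX : u ∈ X'
        · exact h3' u huX x hxX huDu hxDu hux
        · exact tree_sep hT hux hadj hxv huX (reach' x hxX v hvX)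
      have hguardP : ∀ g ∈ P, g ∈ D → g ∈ X' ∧ g ∈ Du := by
        intro g hg hgD
        exact ⟨hPsub hg, (hPD g hg).1 hgD⟩
      have hfilterP : ∀ g ∈ P, g ∈ D →
          P.filter (fun w => T.Adj g w) = X'.filter (fun w => T.Adj g w) := by
        intro g hg hgD
        obtain ⟨hgX, hgDu⟩ := hguardP g hg hgD
        apply Finset.ext
        intro w
        simp only [Finset.mem_filter]
        constructor
        · rintro ⟨h1, h2⟩; exact ⟨hPsub h1, h2⟩
        · rintro ⟨h1, h2⟩
          refine ⟨hclose g hg w h1 ?_ h2, h2⟩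
          intro hwv
          exact h2' g hgX v hvX hgDu hvDu (hwv ▸ h2)
      refine ⟨P, ι', ⟨?_, ?_, ?_, ?_, ?_⟩, ?_, ?_, ?_⟩
      · -- connected
        have hreach : ∀ x ∈ P, ReachIn T P c x := by
          intro x hx
          obtain ⟨_, _, hr⟩ := (hPmem x).1 hx
          obtain ⟨p, hp1, hp2⟩ := hr.support_mem
          refine ⟨p, fun z hz => ?_⟩
          have hzE := hp1 z hz
          exact (hPmem z).2 ⟨(Finset.mem_erase.1 hzE).2, (Finset.mem_erase.1 hzE).1,
            hp2 z hz⟩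
        exact connected_of_reachIn ⟨c, hcP⟩
          (fun x hx y hy => (hreach x hx).symm.trans (hreach y hy))
      · intro g hg g' hg' hgD hg'D
        exact h2' g (hPsub hg) g' (hPsub hg') ((hPD g hg).1 hgD) ((hPD g' hg').1 hg'D)
      · intro x hx y hy hxD hyD
        exact h3' x (hPsub hx) y (hPsub hy)
          (fun h => hxD ((hPD x hx).2 h)) (fun h => hyD ((hPD y hy).2 h))
      · intro g hg hgD
        rw [hfilterP g hg hgD]
        exact h4' g (hPsub hg) ((hPD g hg).1 hgD)
      · intro x hx hxD g hxg hgD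
        have hgu : g ≠ u := by
          rintro rfl
          exact hu_not_nbr x hx hxD hxg.symm
        have hgDu : g ∈ Du := hmemDu g hgD hgu
        have hgX : g ∈ X' :=
          h5' x (hPsub hx) (fun h => hxD (hDuD x h ((hPmem x).1 hx).2.1)) g hxg hgDu
        exact hclose x hx g hgX (hDgv g hgD) hxg
      · -- injectivity
        intro x hx y hy
        refine hinj' ?_ ?_
        · simp only [Finset.coe_sdiff, Set.mem_diff, Finset.mem_coe] at hx ⊢
          exact ⟨hPsub hx.1, fun h => hx.2 ((hPD x hx.1).2 h)⟩
        · simp only [Finset.coe_sdiff, Set.mem_diff, Finset.mem_coe] at hy ⊢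
          exact ⟨hPsub hy.1, fun h => hy.2 ((hPD y hy.1).2 h)⟩
      · intro x hx
        have hx' := Finset.mem_sdiff.1 hx
        exact hlen' x (Finset.mem_sdiff.2 ⟨hPsub hx'.1,
          fun h => hx'.2 ((hPD x hx'.1).2 h)⟩)
      · intro x hx y hy hxy hrel
        have hx' := Finset.mem_sdiff.1 hx
        have hy' := Finset.mem_sdiff.1 hy
        refine hpfx' x (Finset.mem_sdiff.2 ⟨hPsub hx'.1,
            fun h => hx'.2 ((hPD x hx'.1).2 h)⟩)
          y (Finset.mem_sdiff.2 ⟨hPsub hy'.1,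
            fun h => hy'.2 ((hPD y hy'.1).2 h)⟩) hxy ?_
        rcases hrel with h | ⟨g, hg, hg1, hg2⟩
        · exact Or.inl h
        · have hg' := Finset.mem_inter.1 hg
          exact Or.inr ⟨g, Finset.mem_inter.2 ⟨hPsub hg'.1, (hPD g hg'.1).1 hg'.2⟩, hg1, hg2⟩
    -- choose the side avoiding u
    by_cases hua : u ∈ X'.filter (fun x => x ≠ v ∧ ReachIn T (X'.erase v) a x)
    · -- then u is not on the side of b
      refine main b hbX.1 hbDu hbX.2 ?_
      intro hub
      simp only [Finset.mem_filter] at hua hub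
      have : ReachIn T (X'.erase v) a b := hua.2.2.trans hub.2.2.symm
      exact tree_sep hT haX.2 hbX.2 hab (by simp) this
    · exact main a haX.1 haDu haX.2 hua
  · -- v not in X'
    have huX : u ∉ X' := by
      intro huX'
      exact hvX (h5' u huX' huDu v hadj hvDu)
    have hsd : ∀ x, x ∈ X' → (x ∈ D ↔ x ∈ Du) := by
      intro x hx
      constructor
      · intro h; exact hmemDu x h (fun he => huX (he ▸ hx))
      · intro h; exact hDuD x h (fun he => hvX (he ▸ hx))
    by_cases htouch : ∃ x, x ∈ X' ∧ x ∉ Du ∧ T.Adj u x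
    · -- u touches X' : a half-arena
      right
      obtain ⟨x₁, hx₁X, hx₁Du, hx₁adj⟩ := htouch
      set H := X' \ Du with hH
      have hHX : ∀ x ∈ H, x ∈ X' := fun x hx => (Finset.mem_sdiff.1 hx).1
      have hHDu : ∀ x ∈ H, x ∉ Du := fun x hx => (Finset.mem_sdiff.1 hx).2
      have hHD : ∀ x ∈ H, x ∉ D := fun x hx h =>
        hHDu x hx ((hsd x (hHX x hx)).1 h)
      have hx₁H : x₁ ∈ H := Finset.mem_sdiff.2 ⟨hx₁X, hx₁Du⟩
      have huniq : ∀ w ∈ X', T.Adj u w → w = x₁ := by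
        intro w hw hadjw
        by_contra hne
        exact tree_sep hT hadjw hx₁adj hne huX (reach' w hw x₁ hx₁X)
      have hguardX : ∀ g, g ∈ D → g ≠ u → (∃ x ∈ H, T.Adj g x) → g ∈ X' ∧ g ∈ Du := by
        rintro g hgD hgu ⟨x, hxH, hgx⟩
        have hgDu : g ∈ Du := hmemDu g hgD hgu
        exact ⟨h5' x (hHX x hxH) (hHDu x hxH) g hgx.symm hgDu, hgDu⟩
      have hfilterH : ∀ g, g ∈ X' → g ∈ Du →
          H.filter (fun w => T.Adj g w) = X'.filter (fun w => T.Adj g w) := by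
        intro g hgX hgDu
        apply Finset.ext
        intro w
        simp only [Finset.mem_filter]
        constructor
        · rintro ⟨h1, h2⟩; exact ⟨hHX w h1, h2⟩
        · rintro ⟨h1, h2⟩
          refine ⟨Finset.mem_sdiff.2 ⟨h1, fun hwDu => ?_⟩, h2⟩
          exact h2' g hgX w h1 hgDu hwDu h2
      refine ⟨H, ι', ?_, ?_, ⟨x₁, ?_⟩, ?_, ?_, ?_, ?_, ?_, ?_, ?_⟩
      · exact hHD
      · exact fun x hx y hy => h3' x (hHX x hx) y (hHX y hy) (hHDu x hx) (hHDu y hy)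
      · -- u has exactly one neighbour in H
        apply Finset.ext
        intro w
        simp only [Finset.mem_filter, Finset.mem_singleton]
        constructor
        · rintro ⟨h1, h2⟩; exact huniq w (hHX w h1) h2
        · rintro rfl; exact ⟨hx₁H, hx₁adj⟩
      · -- other guards have two neighbours
        intro g hgD hgu htg
        obtain ⟨hgX, hgDu⟩ := hguardX g hgD hgu htg
        rw [hfilterH g hgX hgDu]
        exact h4' g hgX hgDu
      · -- guards independent
        intro g hgD hgcond g' hg'D hg'cond hgg'
        by_cases hgu : g = u
        · subst hgu
          by_cases hg'u : g' = g
          · exact (T.loopless.irrefl g) (hg'u ▸ hgg')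
          · have := hguardX g' hg'D hg'u (hg'cond.resolve_left hg'u)
            have hx₁g' : g' = x₁ := huniq g' this.1 hgg'
            exact hHDu x₁ hx₁H (hx₁g' ▸ this.2)
        · by_cases hg'u : g' = u
          · subst hg'u
            have := hguardX g hgD hgu (hgcond.resolve_left hgu)
            have hx₁g : g = x₁ := huniq g this.1 hgg'.symm
            exact hHDu x₁ hx₁H (hx₁g ▸ this.2)
          · have h1 := hguardX g hgD hgu (hgcond.resolve_left hgu)
            have h2 := hguardX g' hg'D hg'u (hg'cond.resolve_left hg'u)
            exact h2' g h1.1 g' h2.1 h1.2 h2.2 hgg'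
      · -- connectivity of the half-arena
        have hXsub : X' ⊆ hXset T D H u := by
          intro w hw
          rw [hXset]
          by_cases hwDu : w ∈ Du
          · apply Finset.mem_insert_of_mem
            apply Finset.mem_union_right
            refine Finset.mem_filter.2 ⟨(hsd w hw).2 hwDu, ?_⟩
            have hcard := h4' w hw hwDu
            have : (X'.filter (fun x => T.Adj w x)).Nonempty := by
              rw [← Finset.card_pos, hcard]; omega
            obtain ⟨x, hx⟩ := this
            have hx' := Finset.mem_filter.1 hx
            refine ⟨x, Finset.mem_sdiff.2 ⟨hx'.1, fun hxDu => ?_⟩, hx'.2⟩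
            exact h2' w hw x hx'.1 hwDu hxDu hx'.2
          · exact Finset.mem_insert_of_mem
              (Finset.mem_union_left _ (Finset.mem_sdiff.2 ⟨hw, hwDu⟩))
        have hsubX : hXset T D H u ⊆ insert u X' := by
          intro w hw
          rw [hXset] at hw
          rcases Finset.mem_insert.1 hw with rfl | hw'
          · exact Finset.mem_insert_self _ _
          · rcases Finset.mem_union.1 hw' with h | h
            · exact Finset.mem_insert_of_mem (hHX w h)
            · have h' := Finset.mem_filter.1 h
              by_cases hwu : w = u
              · exact hwu ▸ Finset.mem_insert_self _ _
              · exact Finset.mem_insert_of_mem (hguardX w h'.1 hwu h'.2).1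
        intro x hx
        have huXset : u ∈ hXset T D H u := Finset.mem_insert_self _ _
        rcases Finset.mem_insert.1 (hsubX hx) with rfl | hxX
        · exact ReachIn.refl huXset
        · refine (reachIn_single hx₁adj huXset (hXsub hx₁X)).trans ?_
          exact (reach' x₁ hx₁X x hxX).mono hXsub
      · -- v is not in the half-arena
        rw [hXset]
        simp only [Finset.mem_insert, Finset.mem_union]
        push_neg
        refine ⟨hvu, fun h => hvX (hHX v h), fun h => ?_⟩
        exact absurd (Finset.mem_filter.1 h).1 hvD
      · exact hinj'
      · exact hlen'
      · intro x hx y hy hxy hrel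
        refine hpfx' x hx y hy hxy ?_
        rcases hrel with h | ⟨g, hgD, hgu, h1, h2⟩
        · exact Or.inl h
        · have := hguardX g hgD hgu ⟨x, hx, h1.symm⟩
          exact Or.inr ⟨g, Finset.mem_inter.2 ⟨this.1, this.2⟩, h1, h2⟩
    · -- u does not touch X' : X' itself is an arena for D
      left
      push_neg at htouch
      refine ⟨X', ι', ⟨hconn', ?_, ?_, ?_, ?_⟩, ?_, ?_, ?_⟩
      · intro g hg g' hg' hgD hg'D
        exact h2' g hg g' hg' ((hsd g hg).1 hgD) ((hsd g' hg').1 hg'D)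
      · intro x hx y hy hxD hyD
        exact h3' x hx y hy (fun h => hxD ((hsd x hx).2 h)) (fun h => hyD ((hsd y hy).2 h))
      · intro g hg hgD
        exact h4' g hg ((hsd g hg).1 hgD)
      · intro x hx hxD g hxg hgD
        have hxDu : x ∉ Du := fun h => hxD ((hsd x hx).2 h)
        have hgu : g ≠ u := by
          rintro rfl
          exact (htouch x hx hxDu) hxg.symm
        exact h5' x hx hxDu g hxg (hmemDu g hgD hgu)
      · intro x hx y hy
        refine hinj' ?_ ?_
        · simp only [Finset.coe_sdiff, Set.mem_diff, Finset.mem_coe] at hx ⊢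
          exact ⟨hx.1, fun h => hx.2 ((hsd x hx.1).2 h)⟩
        · simp only [Finset.coe_sdiff, Set.mem_diff, Finset.mem_coe] at hy ⊢
          exact ⟨hy.1, fun h => hy.2 ((hsd y hy.1).2 h)⟩
      · intro x hx
        have hx' := Finset.mem_sdiff.1 hx
        exact hlen' x (Finset.mem_sdiff.2 ⟨hx'.1, fun h => hx'.2 ((hsd x hx'.1).2 h)⟩)
      · intro x hx y hy hxy hrel
        have hx' := Finset.mem_sdiff.1 hx
        have hy' := Finset.mem_sdiff.1 hy
        refine hpfx' x (Finset.mem_sdiff.2 ⟨hx'.1, fun h => hx'.2 ((hsd x hx'.1).2 h)⟩)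
          y (Finset.mem_sdiff.2 ⟨hy'.1, fun h => hy'.2 ((hsd y hy'.1).2 h)⟩) hxy ?_
        rcases hrel with h | ⟨g, hg, h1, h2⟩
        · exact Or.inl h
        · have hg' := Finset.mem_inter.1 hg
          exact Or.inr ⟨g, Finset.mem_inter.2 ⟨hg'.1, (hsd g hg'.1).1 hg'.2⟩, h1, h2⟩

/-- Gluing half-arenas at `v` into an arena. -/
lemma glue (hT : T.IsTree) {D : Finset V} {v : V} (hvD : v ∉ D) {t : ℕ}
    (hUne : (D.filter fun u => T.Adj u v).Nonempty)
    (hHC : ∀ u ∈ D.filter fun u => T.Adj u v, HalfCore T D v u t) :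
    ∃ X ι, IsArena T D X ∧ CoreWitness T D X ι (t + 1) := by
  classical
  set U := D.filter fun u => T.Adj u v with hU
  have hUD : ∀ u ∈ U, u ∈ D := fun u hu => (Finset.mem_filter.1 hu).1
  have hUadj : ∀ u ∈ U, T.Adj v u := fun u hu => ((Finset.mem_filter.1 hu).2).symm
  have hUiff : ∀ g, g ∈ U ↔ g ∈ D ∧ T.Adj g v := fun g => Finset.mem_filter
  have hHC' : ∀ u : V, ∃ H ι, u ∈ U → HCprops T D v u t H ι := by
    intro u
    by_cases h : u ∈ U
    · obtain ⟨H, ι, hp⟩ := hHC u h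
      exact ⟨H, ι, fun _ => hp⟩
    · exact ⟨∅, fun _ => [], fun h' => absurd h' h⟩
  choose Hf ιf hprops using hHC'
  have hHD : ∀ u ∈ U, ∀ x ∈ Hf u, x ∉ D := fun u hu => (hprops u hu).1
  have hindep : ∀ u ∈ U, ∀ x ∈ Hf u, ∀ y ∈ Hf u, ¬ T.Adj x y := fun u hu => (hprops u hu).2.1
  have hone : ∀ u ∈ U, ∃ x₁, (Hf u).filter (fun w => T.Adj u w) = {x₁} :=
    fun u hu => (hprops u hu).2.2.1
  have htwo : ∀ u ∈ U, ∀ g ∈ D, g ≠ u → (∃ x ∈ Hf u, T.Adj g x) →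
      ((Hf u).filter fun w => T.Adj g w).card = 2 := fun u hu => (hprops u hu).2.2.2.1
  have hgindep : ∀ u ∈ U, ∀ g ∈ D, (g = u ∨ ∃ x ∈ Hf u, T.Adj g x) → ∀ g' ∈ D,
      (g' = u ∨ ∃ x ∈ Hf u, T.Adj g' x) → ¬ T.Adj g g' := fun u hu => (hprops u hu).2.2.2.2.1
  have hconn : ∀ u ∈ U, ∀ x ∈ hXset T D (Hf u) u, ReachIn T (hXset T D (Hf u) u) u x :=
    fun u hu => (hprops u hu).2.2.2.2.2.1
  have havoid : ∀ u ∈ U, v ∉ hXset T D (Hf u) u := fun u hu => (hprops u hu).2.2.2.2.2.2.1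
  have hinj : ∀ u ∈ U, Set.InjOn (ιf u) ↑(Hf u) := fun u hu => (hprops u hu).2.2.2.2.2.2.2.1
  have hlen : ∀ u ∈ U, ∀ x ∈ Hf u, 1 ≤ (ιf u x).length ∧ (ιf u x).length ≤ t :=
    fun u hu => (hprops u hu).2.2.2.2.2.2.2.2.1
  have hpfx : ∀ u ∈ U, ∀ x ∈ Hf u, ∀ y ∈ Hf u, x ≠ y →
      (T.Adj x y ∨ ∃ g ∈ D, g ≠ u ∧ T.Adj x g ∧ T.Adj g y) →
      ((ιf u x <+: ιf u y) ∨ (ιf u y <+: ιf u x)) :=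
    fun u hu => (hprops u hu).2.2.2.2.2.2.2.2.2
  set Xs : V → Finset V := fun u => hXset T D (Hf u) u with hXs
  have hXsmem : ∀ u x, x ∈ Xs u ↔ x = u ∨ x ∈ Hf u ∨ (x ∈ D ∧ ∃ y ∈ Hf u, T.Adj x y) := by
    intro u x
    simp [hXs, hXset, Finset.mem_insert, Finset.mem_union, Finset.mem_filter, or_assoc]
  have hHsub : ∀ u, Hf u ⊆ Xs u := fun u x hx => (hXsmem u x).2 (Or.inr (Or.inl hx))
  have huXs : ∀ u, u ∈ Xs u := fun u => (hXsmem u u).2 (Or.inl rfl)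
  have hgXs : ∀ u, ∀ g, g ∈ D → (∃ y ∈ Hf u, T.Adj g y) → g ∈ Xs u :=
    fun u g hg ht => (hXsmem u g).2 (Or.inr (Or.inr ⟨hg, ht⟩))
  have hvXs : ∀ u ∈ U, v ∉ Xs u := havoid
  have hHfv : ∀ u ∈ U, v ∉ Hf u := fun u hu hv => hvXs u hu (hHsub u hv)
  -- the side lemma : the pieces only meet at v
  have hside : ∀ u ∈ U, ∀ u' ∈ U, ∀ x ∈ Xs u, ∀ y ∈ Xs u', (x = y ∨ T.Adj x y) → u = u' := by
    intro u hu u' hu' x hx y hy hxy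
    by_contra hne
    have r1 : ReachIn T (Xs u ∪ Xs u') u x := (hconn u hu x hx).mono Finset.subset_union_left
    have r2 : ReachIn T (Xs u ∪ Xs u') y u' :=
      ((hconn u' hu' y hy).mono Finset.subset_union_right).symm
    have r3 : ReachIn T (Xs u ∪ Xs u') u u' := by
      rcases hxy with rfl | hadj
      · exact r1.trans r2
      · exact (r1.adj hadj (Finset.mem_union_right _ hy)).trans r2
    have hvnot : v ∉ Xs u ∪ Xs u' := by
      simp only [Finset.mem_union]
      rintro (h | h)
      · exact hvXs u hu h
      · exact hvXs u' hu' h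
    exact tree_sep hT (hUadj u hu) (hUadj u' hu') hne hvnot r3
  -- shape of members of Xs
  have hshapeD : ∀ u ∈ U, ∀ g ∈ Xs u, g ∈ D → (g = u ∨ ∃ x ∈ Hf u, T.Adj g x) := by
    intro u hu g hg hgD
    rcases (hXsmem u g).1 hg with h | h | h
    · exact Or.inl h
    · exact absurd hgD (hHD u hu g h)
    · exact Or.inr h.2
  have hshapeND : ∀ u ∈ U, ∀ x ∈ Xs u, x ∉ D → x ∈ Hf u := by
    intro u hu x hx hxD
    rcases (hXsmem u x).1 hx with h | h | h
    · exact absurd (by rw [h]; exact hUD u hu) hxD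
    · exact h
    · exact absurd h.1 hxD
  set X : Finset V := insert v (U.biUnion Xs) with hX
  have hXmem : ∀ x, x ∈ X ↔ x = v ∨ ∃ u ∈ U, x ∈ Xs u := by
    intro x; simp [hX, Finset.mem_insert, Finset.mem_biUnion]
  have hXssub : ∀ u ∈ U, Xs u ⊆ X :=
    fun u hu x hx => (hXmem x).2 (Or.inr ⟨u, hu, hx⟩)
  have hvX : v ∈ X := (hXmem v).2 (Or.inl rfl)
  -- no vertex of any Hf is adjacent to v
  have hHnoadjv : ∀ u ∈ U, ∀ x ∈ Hf u, ¬ T.Adj v x := by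
    intro u hu x hx hadj
    have hxu : x ≠ u := fun h => hHD u hu x hx (by rw [h]; exact hUD u hu)
    exact tree_sep hT (hUadj u hu) hadj hxu.symm (hvXs u hu)
      ((hconn u hu x (hHsub u hx)))
  -- unguarded members of X
  have hXND : ∀ x ∈ X, x ∉ D → x = v ∨ ∃ u ∈ U, x ∈ Hf u := by
    intro x hx hxD
    rcases (hXmem x).1 hx with h | ⟨u, hu, hxu⟩
    · exact Or.inl h
    · exact Or.inr ⟨u, hu, hshapeND u hu x hxu hxD⟩
  -- the labelling
  set e : V → ℕ := fun w => (Fintype.equivFin V w : ℕ) with he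
  have he_inj : ∀ w w', e w = e w' → w = w' := by
    intro w w' h
    exact (Fintype.equivFin V).injective (Fin.val_injective h)
  set f : V → List ℕ → List ℕ := fun u l => match l with
    | [] => []
    | a :: r => Nat.pair (e u) a :: r with hf
  have hflen : ∀ u l, (f u l).length = l.length := by
    intro u l; cases l <;> simp [hf]
  have hfpfx : ∀ u l₁ l₂, l₁ ≠ [] → l₁ <+: l₂ → f u l₁ <+: f u l₂ := by
    intro u l₁ l₂ hne hp
    obtain ⟨s, rfl⟩ := hp
    cases l₁ with
    | nil => exact absurd rfl hne
    | cons a r => simp [hf, List.cons_append]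
  have hfinj : ∀ u u' l₁ l₂, l₁ ≠ [] → l₂ ≠ [] → f u l₁ = f u' l₂ → u = u' ∧ l₁ = l₂ := by
    intro u u' l₁ l₂ h1 h2 heq
    cases l₁ with
    | nil => exact absurd rfl h1
    | cons a r => cases l₂ with
      | nil => exact absurd rfl h2
      | cons a' r' =>
          simp only [hf, List.cons.injEq] at heq
          obtain ⟨hpair, rfl⟩ := heq
          obtain ⟨h3, h4⟩ := Nat.pair_eq_pair.1 hpair
          exact ⟨he_inj _ _ h3, by rw [h4]⟩
  have hfnil : ∀ u l, f u l = [] → l = [] := by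
    intro u l h
    cases l with
    | nil => rfl
    | cons a r => simp [hf] at h
  have hne_nil : ∀ u ∈ U, ∀ x ∈ Hf u, ιf u x ≠ [] := by
    intro u hu x hx h
    have := (hlen u hu x hx).1
    rw [h] at this; simp at this
  set ι : V → List ℕ := fun x =>
    if x = v then [0]
    else if hx : ∃ u, u ∈ U ∧ x ∈ Hf u then 0 :: f hx.choose (ιf hx.choose x)
    else [] with hι
  have hιv : ι v = [0] := by simp [hι]
  have hιH : ∀ u ∈ U, ∀ x ∈ Hf u, ι x = 0 :: f u (ιf u x) := by
    intro u hu x hx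
    have hxv : x ≠ v := fun h => hHfv u hu (h ▸ hx)
    have hex : ∃ u', u' ∈ U ∧ x ∈ Hf u' := ⟨u, hu, hx⟩
    rw [hι]
    simp only [hxv, if_false, dif_pos hex]
    have hu' := hex.choose_spec
    have : hex.choose = u :=
      hside _ hu'.1 u hu x (hHsub _ hu'.2) x (hHsub u hx) (Or.inl rfl)
    rw [this]
  -- IsArena
  refine ⟨X, ι, ⟨?_, ?_, ?_, ?_, ?_⟩, ?_, ?_, ?_⟩
  · -- connected
    have hreach : ∀ x ∈ X, ReachIn T X v x := by
      intro x hx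
      rcases (hXmem x).1 hx with rfl | ⟨u, hu, hxu⟩
      · exact ReachIn.refl hvX
      · exact ((reachIn_single (hUadj u hu) hvX (hXssub u hu (huXs u))).trans
          ((hconn u hu x hxu).mono (hXssub u hu)))
    exact connected_of_reachIn ⟨v, hvX⟩
      (fun x hx y hy => (hreach x hx).symm.trans (hreach y hy))
  · -- guards independent
    intro g hg g' hg' hgD hg'D hadj
    have hgv : g ≠ v := fun h => hvD (h ▸ hgD)
    have hg'v : g' ≠ v := fun h => hvD (h ▸ hg'D)
    obtain ⟨u, hu, hgu⟩ := ((hXmem g).1 hg).resolve_left hgv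
    obtain ⟨u', hu', hg'u⟩ := ((hXmem g').1 hg').resolve_left hg'v
    have huu : u = u' := hside u hu u' hu' g hgu g' hg'u (Or.inr hadj)
    have hg'u2 : g' ∈ Xs u := by rw [huu]; exact hg'u
    exact hgindep u hu g hgD (hshapeD u hu g hgu hgD) g' hg'D
      (hshapeD u hu g' hg'u2 hg'D) hadj
  · -- unguarded independent
    intro x hx y hy hxD hyD hadj
    rcases hXND x hx hxD with rfl | ⟨u, hu, hxu⟩
    · rcases hXND y hy hyD with rfl | ⟨u, hu, hyu⟩
      · exact (T.loopless.irrefl _) hadj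
      · exact hHnoadjv u hu y hyu hadj
    · rcases hXND y hy hyD with rfl | ⟨u', hu', hyu⟩
      · exact hHnoadjv u hu x hxu hadj.symm
      · have huu : u = u' :=
          hside u hu u' hu' x (hHsub u hxu) y (hHsub u' hyu) (Or.inr hadj)
        have hyu2 : y ∈ Hf u := by rw [huu]; exact hyu
        exact hindep u hu x hxu y hyu2 hadj
  · -- guards have degree two
    intro g hg hgD
    have hgv : g ≠ v := fun h => hvD (h ▸ hgD)
    obtain ⟨u, hu, hgu⟩ := ((hXmem g).1 hg).resolve_left hgv
    obtain ⟨x₁, hx₁⟩ := hone u hu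
    have hx₁H : x₁ ∈ Hf u := by
      have : x₁ ∈ (Hf u).filter (fun w => T.Adj u w) := by rw [hx₁]; simp
      exact (Finset.mem_filter.1 this).1
    have hx₁adj : T.Adj u x₁ := by
      have : x₁ ∈ (Hf u).filter (fun w => T.Adj u w) := by rw [hx₁]; simp
      exact (Finset.mem_filter.1 this).2
    by_cases hgu' : g = u
    · have hfil : X.filter (fun w => T.Adj g w) = {v, x₁} := by
        apply Finset.ext
        intro w
        simp only [Finset.mem_filter, Finset.mem_insert, Finset.mem_singleton]
        constructor
        · rintro ⟨hwX, hadj⟩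
          rcases (hXmem w).1 hwX with rfl | ⟨u', hu'', hwu⟩
          · exact Or.inl rfl
          · have huu : u' = u := by
              refine hside u' hu'' u hu w hwu u (huXs u) (Or.inr ?_)
              rw [← hgu']; exact hadj.symm
            have hwu2 : w ∈ Xs u := by rw [← huu]; exact hwu
            have hadj2 : T.Adj u w := by rw [← hgu']; exact hadj
            rcases (hXsmem u w).1 hwu2 with rfl | h | h
            · exact absurd hadj2 (T.loopless.irrefl _)
            · right
              have hmem : w ∈ (Hf u).filter (fun w => T.Adj u w) :=
                Finset.mem_filter.2 ⟨h, hadj2⟩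
              rw [hx₁] at hmem
              exact Finset.mem_singleton.1 hmem
            · exact absurd hadj2 (hgindep u hu u (hUD u hu) (Or.inl rfl) w h.1 (Or.inr h.2))
        · rintro (rfl | rfl)
          · subst hgu'; exact ⟨hvX, (hUadj g hu).symm⟩
          · subst hgu'; exact ⟨hXssub g hu (hHsub g hx₁H), hx₁adj⟩
      rw [hfil]
      rw [Finset.card_insert_of_notMem (by
        simp only [Finset.mem_singleton]
        exact fun h => hHfv u hu (h ▸ hx₁H)), Finset.card_singleton]
    · have htouch : ∃ x ∈ Hf u, T.Adj g x := (hshapeD u hu g hgu hgD).resolve_left hgu'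
      have : X.filter (fun w => T.Adj g w) = (Hf u).filter (fun w => T.Adj g w) := by
        apply Finset.ext
        intro w
        simp only [Finset.mem_filter]
        constructor
        · rintro ⟨hwX, hadj⟩
          refine ⟨?_, hadj⟩
          rcases (hXmem w).1 hwX with rfl | ⟨u', hu'', hwu⟩
          · exfalso
            have hgU : g ∈ U := (hUiff g).2 ⟨hgD, hadj⟩
            exact hgu' (hside u hu g hgU g hgu g (huXs g) (Or.inl rfl)).symm
          · have huu : u' = u := hside u' hu'' u hu w hwu g hgu (Or.inr hadj.symm)
            have hwu2 : w ∈ Xs u := by rw [← huu]; exact hwu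
            rcases (hXsmem u w).1 hwu2 with rfl | h | h
            · exact absurd hadj (hgindep w hu g hgD (Or.inr htouch) w (hUD w hu)
                (Or.inl rfl))
            · exact h
            · exact absurd hadj (hgindep u hu g hgD (Or.inr htouch) w h.1 (Or.inr h.2))
        · rintro ⟨hwH, hadj⟩
          exact ⟨hXssub u hu (hHsub u hwH), hadj⟩
      rw [this]
      exact htwo u hu g hgD hgu' htouch
  · -- guards of unguarded vertices are inside
    intro x hx hxD g hadj hgD
    rcases hXND x hx hxD with rfl | ⟨u, hu, hxu⟩
    · exact hXssub g ((hUiff g).2 ⟨hgD, hadj.symm⟩) (huXs g)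
    · exact hXssub u hu (hgXs u g hgD ⟨x, hxu, hadj.symm⟩)
  · -- injectivity of ι
    intro x hx y hy hxy
    simp only [Finset.coe_sdiff, Set.mem_diff, Finset.mem_coe] at hx hy
    rcases hXND x hx.1 hx.2 with rfl | ⟨u, hu, hxu⟩
    · rcases hXND y hy.1 hy.2 with rfl | ⟨u, hu, hyu⟩
      · rfl
      · exfalso
        rw [hιv, hιH u hu y hyu] at hxy
        injection hxy with h1 h2
        exact hne_nil u hu y hyu (hfnil u _ h2.symm)
    · rcases hXND y hy.1 hy.2 with rfl | ⟨u', hu', hyu⟩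
      · exfalso
        rw [hιv, hιH u hu x hxu] at hxy
        injection hxy with h1 h2
        exact hne_nil u hu x hxu (hfnil u _ h2)
      · rw [hιH u hu x hxu, hιH u' hu' y hyu] at hxy
        have hxy' : f u (ιf u x) = f u' (ιf u' y) := by
          simpa using hxy
        obtain ⟨rfl, heq⟩ := hfinj u u' _ _ (hne_nil u hu x hxu) (hne_nil u' hu' y hyu) hxy'
        exact hinj u hu hxu hyu heq
  · -- lengths
    intro x hx
    rcases hXND x (Finset.mem_sdiff.1 hx).1 (Finset.mem_sdiff.1 hx).2 with rfl | ⟨u, hu, hxu⟩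
    · rw [hιv]; exact ⟨le_refl _, Nat.succ_le_succ (Nat.zero_le t)⟩
    · rw [hιH u hu x hxu]
      have := hlen u hu x hxu
      simp only [List.length_cons, hflen]
      omega
  · -- prefix condition
    intro x hx y hy hxy hrel
    rcases hXND x (Finset.mem_sdiff.1 hx).1 (Finset.mem_sdiff.1 hx).2 with rfl | ⟨u, hu, hxu⟩
    · left
      rcases hXND y (Finset.mem_sdiff.1 hy).1 (Finset.mem_sdiff.1 hy).2 with rfl | ⟨u, hu, hyu⟩
      · exact absurd rfl hxy
      · rw [hιv, hιH u hu y hyu]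
        exact ⟨_, rfl⟩
    · rcases hXND y (Finset.mem_sdiff.1 hy).1 (Finset.mem_sdiff.1 hy).2 with rfl | ⟨u', hu', hyu⟩
      · right
        rw [hιv, hιH u hu x hxu]
        exact ⟨_, rfl⟩
      · -- both in half-arenas : same half-arena
        have huu : u = u' := by
          rcases hrel with hadj | ⟨g, hgX, h1, h2⟩
          · exact hside u hu u' hu' x (hHsub u hxu) y (hHsub u' hyu) (Or.inr hadj)
          · have hgD : g ∈ D := (Finset.mem_inter.1 hgX).2
            have hgv : g ≠ v := fun h => hvD (h ▸ hgD)
            obtain ⟨u'', hu'', hgu⟩ :=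
              ((hXmem g).1 (Finset.mem_inter.1 hgX).1).resolve_left hgv
            have e1 : u = u'' := hside u hu u'' hu'' x (hHsub u hxu) g hgu (Or.inr h1)
            have e2 : u'' = u' := hside u'' hu'' u' hu' g hgu y (hHsub u' hyu) (Or.inr h2)
            exact e1.trans e2
        have hyu2 : y ∈ Hf u := by rw [huu]; exact hyu
        have hp : (ιf u x <+: ιf u y) ∨ (ιf u y <+: ιf u x) := by
          refine hpfx u hu x hxu y hyu2 hxy ?_
          rcases hrel with hadj | ⟨g, hgX, h1, h2⟩
          · exact Or.inl hadj
          · right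
            have hgD : g ∈ D := (Finset.mem_inter.1 hgX).2
            refine ⟨g, hgD, ?_, h1, h2⟩
            rintro rfl
            obtain ⟨x₁, hx₁⟩ := hone g hu
            have e1 : x ∈ (Hf g).filter (fun w => T.Adj g w) :=
              Finset.mem_filter.2 ⟨hxu, h1.symm⟩
            have e2 : y ∈ (Hf g).filter (fun w => T.Adj g w) :=
              Finset.mem_filter.2 ⟨hyu2, h2⟩
            rw [hx₁, Finset.mem_singleton] at e1 e2
            exact hxy (e1.trans e2.symm)
        rw [hιH u hu x hxu, hιH u hu y hyu2]
        rcases hp with hp | hp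
        · exact Or.inl (List.cons_prefix_cons.2 ⟨rfl, hfpfx u _ _ (hne_nil u hu x hxu) hp⟩)
        · exact Or.inr (List.cons_prefix_cons.2 ⟨rfl, hfpfx u _ _ (hne_nil u hu y hyu2) hp⟩)

theorem main (hT : T.IsTree) : ∀ (t : ℕ) (D : Finset V), AttackerWinsIn T t D →
    ∃ X ι, IsArena T D X ∧ CoreWitness T D X ι t := by
  intro t
  induction t with
  | zero => intro D h; exact absurd h (by simp [AttackerWinsIn])
  | succ t ih =>
      intro D h
      obtain ⟨v, hvD, hresp⟩ : ∃ v, v ∉ D ∧ ∀ u ∈ D, T.Adj u v →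
          AttackerWinsIn T t (insert v (D.erase u)) := h
      by_cases hUne : (D.filter fun u => T.Adj u v).Nonempty
      · by_cases hglob : ∃ X ι, IsArena T D X ∧ CoreWitness T D X ι t
        · obtain ⟨X, ι, h1, h2⟩ := hglob
          exact ⟨X, ι, h1, h2.mono (Nat.le_succ t)⟩
        · refine glue hT hvD hUne (fun u hu => ?_)
          simp only [Finset.mem_filter] at hu
          obtain ⟨X', ι', h1, h2⟩ := ih _ (hresp u hu.1 hu.2)
          refine (extract hT hvD hu.1 hu.2 h1 h2).resolve_left (fun hl => hglob hl)
      · -- no guarded neighbour : the singleton {v} is an arena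
        refine ⟨{v}, fun _ => [0], ⟨?_, ?_, ?_, ?_, ?_⟩, ?_, ?_, ?_⟩
        · refine connected_of_reachIn ⟨v, Finset.mem_singleton_self v⟩ ?_
          intro x hx y hy
          have hxy : x = y := by simp_all
          subst hxy
          exact ReachIn.refl hx
        · intro a ha b hb haD hbD
          simp only [Finset.mem_singleton] at ha
          subst ha; exact absurd haD hvD
        · intro a ha b hb haD hbD
          simp only [Finset.mem_singleton] at ha hb
          subst ha; subst hb; simp
        · intro a ha haD
          simp only [Finset.mem_singleton] at ha
          subst ha; exact absurd haD hvD
        · intro a ha haD g hag hgD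
          simp only [Finset.mem_singleton] at ha
          exact absurd ⟨g, Finset.mem_filter.2 ⟨hgD, ha ▸ hag.symm⟩⟩ hUne
        · intro x hx y hy hxy
          simp only [Finset.coe_sdiff, Set.mem_diff, Finset.mem_coe,
            Finset.mem_singleton] at hx hy
          simp [hx.1, hy.1]
        · intro x hx; simp
        · intro x hx y hy hxy hrel
          simp only [Finset.mem_sdiff, Finset.mem_singleton] at hx hy
          exact absurd (hx.1.trans hy.1.symm) hxy

end Main

/-- If `t_T(D) = t < +∞`, then `(T, D)` has an arena `X` with `ctd(X) ≤ t`. -/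
theorem stmt9 {V : Type*} [Fintype V] [DecidableEq V] (T : SimpleGraph V)
    [DecidableRel T.Adj] (hT : T.IsTree) (D : Finset V) (t : ℕ)
    (h : gameValue T D = (t : ℕ∞)) :
    ∃ X : Finset V, IsArena T D X ∧ ctd T D X ≤ t := by
  -- first extract `AttackerWinsIn T t D`
  have hwin : AttackerWinsIn T t D := by
    set Sset : Set ℕ∞ := {n : ℕ∞ | ∃ t : ℕ, n = (t : ℕ∞) ∧ AttackerWinsIn T t D} with hSset
    have hne : Sset.Nonempty := by
      by_contra hne
      rw [Set.not_nonempty_iff_eq_empty] at hne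
      rw [gameValue, ← hSset, hne, sInf_empty] at h
      exact (ENat.coe_ne_top t) h.symm
    obtain ⟨n, hn⟩ := hne
    obtain ⟨t', rfl, ht'⟩ := hn
    set M : Set ℕ := {m : ℕ | AttackerWinsIn T m D} with hM
    have hMne : M.Nonempty := ⟨t', ht'⟩
    have hmem : sInf M ∈ M := Nat.sInf_mem hMne
    have hval : gameValue T D = ((sInf M : ℕ) : ℕ∞) := by
      apply le_antisymm
      · exact sInf_le (show ((sInf M : ℕ) : ℕ∞) ∈ Sset from ⟨sInf M, rfl, hmem⟩)
      · apply le_sInf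
        rintro n ⟨m, rfl, hm⟩
        exact_mod_cast Nat.sInf_le (show m ∈ M from hm)
    rw [h] at hval
    have : t = sInf M := by exact_mod_cast hval
    rw [this]
    exact hmem
  obtain ⟨X, ι, hX, hcw⟩ := main hT t D hwin
  refine ⟨X, hX, ?_⟩
  have : TreedepthLE (contractedTree T D X) t := by
    obtain ⟨hinj, hlen, hpfx⟩ := hcw
    refine ⟨fun a => ι a.1, ?_, ?_, ?_⟩
    · intro a b hab
      exact Subtype.ext (hinj (by exact_mod_cast a.2) (by exact_mod_cast b.2) hab)
    · intro a; exact hlen a.1 a.2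
    · intro a b hab
      rw [contractedTree, SimpleGraph.fromRel_adj] at hab
      obtain ⟨hne, hrel⟩ := hab
      refine hpfx a.1 a.2 b.1 b.2 (fun hh => hne (Subtype.ext hh)) ?_
      rcases hrel with (h | ⟨g, hg, h1, h2⟩) | (h | ⟨g, hg, h1, h2⟩)
      · exact Or.inl h
      · exact Or.inr ⟨g, hg, h1, h2⟩
      · exact Or.inl h.symm
      · exact Or.inr ⟨g, hg, h2.symm, h1.symm⟩
  exact Nat.sInf_le this
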